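/- Let μ be a probability measure on ℝ supported in [0,∞) such that t ↦ μ((t,∞))^{1/n} is concave on the interval where it is positive, for some positive integer n. Then for every p ≥ 1, (∫ t^p dμ)^{1/p} ≤ (n+1) ∫ t dμ. -/

import Mathlib

open MeasureTheory Real Set

/-- Reverse Hölder bound for measures with concave `n`-th root of the tail function:
if `μ` is a probability measure supported in `[0,∞)` and `t ↦ μ((t,∞))^{1/n}` is concave
where positive, then `(∫ t^p dμ)^{1/p} ≤ (n+1) ∫ t dμ` for all `p ≥ 1`. -/
theorem stmt8 (n : ℕ) (hn : 0 < n) (μ : Measure ℝ) [IsProbabilityMeasure μ]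
    (hsupp : μ (Set.Iio 0) = 0)
    (hconc : ConcaveOn ℝ {t : ℝ | 0 < (μ (Set.Ioi t)).toReal}
      (fun t => (μ (Set.Ioi t)).toReal ^ ((1 : ℝ) / n)))
    (p : ℝ) (hp : 1 ≤ p) :
    (∫ t, t ^ p ∂μ) ^ (1 / p) ≤ (n + 1) * ∫ t, t ∂μ := by
  have hp0 : (0:ℝ) < p := lt_of_lt_of_le zero_lt_one hp
  have hae0 : ∀ᵐ t ∂μ, (0:ℝ) ≤ t := by
    have hs : {t : ℝ | ¬ (0:ℝ) ≤ t} = Set.Iio 0 := by ext t; simp [not_le]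
    rw [ae_iff, hs]; exact hsupp
  by_cases hint : Integrable (fun t : ℝ => t) μ
  · -- main case
    set m : ℝ := ∫ t, t ∂μ with hm
    have hm0 : 0 ≤ m := integral_nonneg_of_ae hae0
    -- measure of Ioi (-h) is 1
    have hFone : ∀ h : ℝ, 0 < h → μ (Set.Ioi (-h)) = 1 := by
      intro h hh
      refine le_antisymm prob_le_one ?_
      calc (1:ENNReal) = μ Set.univ := measure_univ.symm
        _ ≤ μ (Set.Iio 0 ∪ Set.Ioi (-h)) := by
            refine measure_mono fun x _ => ?_
            rcases lt_or_ge x 0 with h' | h'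
            · exact Or.inl h'
            · exact Or.inr (by simp only [Set.mem_Ioi]; linarith)
        _ ≤ μ (Set.Iio 0) + μ (Set.Ioi (-h)) := measure_union_le _ _
        _ = μ (Set.Ioi (-h)) := by rw [hsupp, zero_add]
    -- chord bound from concavity
    have chord : ∀ s : ℝ, 0 < s → μ (Set.Ioi s) ≠ 0 → ∀ t : ℝ, 0 < t → t < s →
        (1 - t / s) ^ n ≤ (μ (Set.Ioi t)).toReal := by
      intro s hs hμs t ht hts
      have hGs : (0:ℝ) ≤ (μ (Set.Ioi s)).toReal ^ ((1:ℝ)/n) :=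
        Real.rpow_nonneg ENNReal.toReal_nonneg _
      have key : ∀ h : ℝ, 0 < h →
          (s - t) / (s + h) ≤ (μ (Set.Ioi t)).toReal ^ ((1:ℝ)/n) := by
        intro h hh
        have ha : (-h) ∈ {t : ℝ | 0 < (μ (Set.Ioi t)).toReal} := by
          simp only [Set.mem_setOf_eq, hFone h hh]; norm_num
        have hb : s ∈ {t : ℝ | 0 < (μ (Set.Ioi t)).toReal} :=
          ENNReal.toReal_pos hμs (measure_ne_top μ _)
        have hsh : (0:ℝ) < s + h := by linarith
        have hl1 : (0:ℝ) ≤ (s - t) / (s + h) := by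
          apply div_nonneg <;> linarith
        have hl2 : (0:ℝ) ≤ (t + h) / (s + h) := by
          apply div_nonneg <;> linarith
        have hsum : (s - t)/(s+h) + (t+h)/(s+h) = 1 := by field_simp; ring
        have hcc := hconc.2 ha hb hl1 hl2 hsum
        simp only [smul_eq_mul] at hcc
        have hcomb : (s-t)/(s+h) * -h + (t+h)/(s+h) * s = t := by
          field_simp; ring
        rw [hcomb] at hcc
        have hGa : (μ (Set.Ioi (-h))).toReal ^ ((1:ℝ)/n) = 1 := by
          rw [hFone h hh]; simp
        rw [hGa, mul_one] at hcc
        have : (0:ℝ) ≤ (t+h)/(s+h) * ((μ (Set.Ioi s)).toReal ^ ((1:ℝ)/n)) :=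
          mul_nonneg hl2 hGs
        linarith
      have hlim : Filter.Tendsto (fun h : ℝ => (s - t) / (s + h))
          (nhdsWithin 0 (Set.Ioi 0)) (nhds ((s - t) / s)) := by
        have hc : Filter.Tendsto (fun h : ℝ => (s - t) / (s + h))
            (nhds 0) (nhds ((s - t) / (s + 0))) := by
          refine Filter.Tendsto.div tendsto_const_nhds
            (tendsto_const_nhds.add Filter.tendsto_id) (by linarith)
        rw [add_zero] at hc
        exact hc.mono_left nhdsWithin_le_nhds
      have hGt : (s - t) / s ≤ (μ (Set.Ioi t)).toReal ^ ((1:ℝ)/n) := by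
        refine le_of_tendsto hlim ?_
        filter_upwards [self_mem_nhdsWithin] with h hh
        exact key h hh
      have h1 : (0:ℝ) ≤ 1 - t / s := by
        rw [sub_nonneg, div_le_one hs]; exact hts.le
      have h2 : 1 - t / s = (s - t) / s := by field_simp
      calc (1 - t / s) ^ n ≤ ((μ (Set.Ioi t)).toReal ^ ((1:ℝ)/n)) ^ n := by
            refine pow_le_pow_left₀ h1 ?_ n
            rw [h2]; exact hGt
        _ = (μ (Set.Ioi t)).toReal := by
            rw [one_div, Real.rpow_inv_natCast_pow ENNReal.toReal_nonneg hn.ne']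
    -- layer cake
    have layer : ENNReal.ofReal m = ∫⁻ t in Set.Ioi (0:ℝ), μ (Set.Ioi t) := by
      rw [hm, ofReal_integral_eq_lintegral_ofReal hint hae0,
        lintegral_eq_lintegral_meas_lt μ hae0 aemeasurable_id]
      rfl
    have hn1 : (0:ℝ) < (n:ℝ) + 1 := by positivity
    -- first moment lower bound
    have hms : ∀ s : ℝ, 0 < s → μ (Set.Ioi s) ≠ 0 → s / ((n:ℝ) + 1) ≤ m := by
      intro s hs hμs
      have hcont : Continuous (fun t : ℝ => (1 - t/s) ^ n) := by fun_prop
      have hInt : IntegrableOn (fun t : ℝ => (1 - t/s) ^ n) (Set.Ioo 0 s) :=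
        (hcont.integrableOn_Icc).mono_set Set.Ioo_subset_Icc_self
      have hnnI : 0 ≤ᵐ[volume.restrict (Set.Ioo 0 s)] (fun t : ℝ => (1 - t/s) ^ n) := by
        refine (ae_restrict_iff' measurableSet_Ioo).mpr (Filter.Eventually.of_forall ?_)
        intro t ht
        have : (0:ℝ) ≤ 1 - t / s := by
          rw [sub_nonneg, div_le_one hs]; exact ht.2.le
        positivity
      have hval : (∫ t in Set.Ioo (0:ℝ) s, (1 - t/s) ^ n) = s / ((n:ℝ) + 1) := by
        rw [← integral_Ioc_eq_integral_Ioo, ← intervalIntegral.integral_of_le hs.le]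
        have := intervalIntegral.integral_comp_div (a := 0) (b := s)
          (c := s) (f := fun u : ℝ => (1 - u) ^ n) hs.ne'
        simp only [zero_div, div_self hs.ne'] at this
        rw [this, intervalIntegral.integral_comp_sub_left (fun u : ℝ => u ^ n) 1]
        norm_num [integral_pow]
        ring
      have h1 : ENNReal.ofReal (s/((n:ℝ)+1)) ≤ ENNReal.ofReal m := by
        calc ENNReal.ofReal (s/((n:ℝ)+1))
            = ∫⁻ t in Set.Ioo (0:ℝ) s, ENNReal.ofReal ((1 - t/s) ^ n) := by
              rw [← ofReal_integral_eq_lintegral_ofReal hInt hnnI, hval]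
          _ ≤ ∫⁻ t in Set.Ioo (0:ℝ) s, μ (Set.Ioi t) := by
              refine setLIntegral_mono (Antitone.measurable fun a b hab =>
                measure_mono (Set.Ioi_subset_Ioi hab)) ?_
              intro t ht
              calc ENNReal.ofReal ((1 - t/s) ^ n)
                  ≤ ENNReal.ofReal ((μ (Set.Ioi t)).toReal) :=
                    ENNReal.ofReal_le_ofReal (chord s hs hμs t ht.1 ht.2)
                _ = μ (Set.Ioi t) := ENNReal.ofReal_toReal (measure_ne_top μ _)
          _ ≤ ∫⁻ t in Set.Ioi (0:ℝ), μ (Set.Ioi t) :=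
              lintegral_mono_set Set.Ioo_subset_Ioi_self
          _ = ENNReal.ofReal m := layer.symm
      exact (ENNReal.ofReal_le_ofReal_iff hm0).mp h1
    set S : ℝ := ((n:ℝ) + 1) * m with hSdef
    have hS0 : 0 ≤ S := mul_nonneg (by positivity) hm0
    have hnullS : μ (Set.Ioi S) = 0 := by
      have hnull : ∀ u : ℝ, S < u → μ (Set.Ioi u) = 0 := by
        intro u hu
        by_contra h
        have hu0 : 0 < u := lt_of_le_of_lt hS0 hu
        have h2 := hms u hu0 h
        rw [div_le_iff₀ hn1] at h2
        have : u ≤ S := by rw [hSdef]; linarith [h2]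
        linarith
      have hsub : Set.Ioi S ⊆ ⋃ k : ℕ, Set.Ioi (S + ((k:ℝ) + 1)⁻¹) := by
        intro x hx
        obtain ⟨k, hk⟩ := exists_nat_one_div_lt (by simpa using sub_pos.mpr (Set.mem_Ioi.mp hx) : (0:ℝ) < x - S)
        rw [one_div] at hk
        exact Set.mem_iUnion.mpr ⟨k, by simp only [Set.mem_Ioi]; linarith⟩
      refine measure_mono_null hsub (measure_iUnion_null fun k => hnull _ ?_)
      have : (0:ℝ) < ((k:ℝ) + 1)⁻¹ := by positivity
      linarith
    have hbound : ∀ᵐ t ∂μ, t ∈ Set.Icc (0:ℝ) S := by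
      rw [ae_iff]
      refine measure_mono_null (fun x hx => ?_) (measure_union_null hsupp hnullS)
      simp only [Set.mem_setOf_eq, Set.mem_Icc, not_and_or, not_le] at hx
      rcases hx with hx | hx
      · exact Or.inl hx
      · exact Or.inr hx
    have hmeas : Measurable (fun t : ℝ => t ^ p) :=
      (Real.continuous_rpow_const (by linarith)).measurable
    have hb : ∀ᵐ t ∂μ, ‖t ^ p‖ ≤ S ^ p := by
      filter_upwards [hbound] with t ht
      rw [Real.norm_eq_abs, abs_of_nonneg (Real.rpow_nonneg ht.1 p)]
      exact Real.rpow_le_rpow ht.1 ht.2 (by linarith)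
    have hintp : Integrable (fun t : ℝ => t ^ p) μ :=
      (integrable_const (S ^ p)).mono' hmeas.aestronglyMeasurable hb
    have hle : (∫ t, t ^ p ∂μ) ≤ S ^ p := by
      calc ∫ t, t ^ p ∂μ ≤ ∫ _t, S ^ p ∂μ := by
            refine integral_mono_ae hintp (integrable_const _) ?_
            filter_upwards [hbound] with t ht
            exact Real.rpow_le_rpow ht.1 ht.2 (by linarith)
        _ = S ^ p := by simp
    have hnnint : 0 ≤ ∫ t, t ^ p ∂μ := by
      refine integral_nonneg_of_ae ?_
      filter_upwards [hae0] with t ht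
      exact Real.rpow_nonneg ht p
    calc (∫ t, t ^ p ∂μ) ^ (1/p)
        ≤ (S ^ p) ^ (1/p) := Real.rpow_le_rpow hnnint hle (by positivity)
      _ = S := by rw [one_div, Real.rpow_rpow_inv hS0 (by linarith : p ≠ 0)]
      _ = ((n:ℝ) + 1) * ∫ t, t ∂μ := by rw [hSdef, hm]
  · -- id not integrable : both sides are junk zero
    have hintp : ¬ Integrable (fun t : ℝ => t ^ p) μ := by
      intro h
      apply hint
      have hg : Integrable (fun t : ℝ => 1 + t ^ p) μ := (integrable_const 1).add h
      refine hg.mono' measurable_id.aestronglyMeasurable ?_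
      filter_upwards [hae0] with t ht
      rw [Real.norm_eq_abs, abs_of_nonneg ht]
      rcases le_total t 1 with h1 | h1
      · have h2 : (0:ℝ) ≤ t ^ p := Real.rpow_nonneg ht p
        linarith
      · have h2 : t ≤ t ^ p := by
          calc t = t ^ (1:ℝ) := (Real.rpow_one t).symm
            _ ≤ t ^ p := Real.rpow_le_rpow_of_exponent_le h1 hp
        linarith
    rw [integral_undef hintp, integral_undef hint,
      Real.zero_rpow (by positivity : (1:ℝ)/p ≠ 0), mul_zero]
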